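/- Let β : ℝ → ℝ satisfy hypothesis (H_β) and let m > 0. Then there exists a constant C > 0 such that ψ'(ψ⁻¹(v)) ≥ C v for every v ≥ 0; consequently g(v) := ψ'(ψ⁻¹(v)) − 1 satisfies g(v) ≥ C v − 1 for every v ≥ 0. -/

import Mathlib

open MeasureTheory Filter Set

/-- The integro-exponential change of variables `ψ(u) = ∫₀ᵘ exp(m ∫₀ˢ β(t) dt) ds`. -/
noncomputable def psi (β : ℝ → ℝ) (m : ℝ) (u : ℝ) : ℝ :=
  ∫ s in (0:ℝ)..u, Real.exp (m * ∫ t in (0:ℝ)..s, β t)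

/-- Its derivative `ψ'(u) = exp(m ∫₀ᵘ β(t) dt)`. -/
noncomputable def psi' (β : ℝ → ℝ) (m : ℝ) (u : ℝ) : ℝ :=
  Real.exp (m * ∫ t in (0:ℝ)..u, β t)

/-- The inverse function `ψ⁻¹` of `ψ`. -/
noncomputable def psiInv (β : ℝ → ℝ) (m : ℝ) : ℝ → ℝ :=
  Function.invFun (psi β m)

theorem stmt2 (β : ℝ → ℝ) (m : ℝ) (hm : 0 < m)
    (hodd : ∀ s, β (-s) = -β s)
    (hlip : LocallyLipschitz β)
    (hmono : Monotone β)
    (hsign : ∀ s, 0 ≤ β s * s)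
    (htop : Tendsto β atTop atTop) :
    ∃ C > (0:ℝ),
      (∀ v, 0 ≤ v → C * v ≤ psi' β m (psiInv β m v)) ∧
      (∀ v, 0 ≤ v → C * v - 1 ≤ psi' β m (psiInv β m v) - 1) := by
  have hβc : Continuous β := hlip.continuous
  have hβ0 : β 0 = 0 := by have := hodd 0; simp at this; linarith
  have hβnn : ∀ s, 0 ≤ s → 0 ≤ β s := fun s hs => hβ0 ▸ hmono hs
  set F : ℝ → ℝ := fun u => ∫ t in (0:ℝ)..u, β t with hF
  have hFderiv : ∀ u, HasDerivAt F (β u) u := fun u =>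
    (hβc.integral_hasStrictDerivAt 0 u).hasDerivAt
  have hFcont : Continuous F :=
    continuous_iff_continuousAt.2 fun u => (hFderiv u).continuousAt
  have hFnn : ∀ u, 0 ≤ u → 0 ≤ F u := fun u hu =>
    intervalIntegral.integral_nonneg hu (fun t ht => hβnn t ht.1)
  have hFdiff : ∀ x y, 0 ≤ x → x ≤ y → F y - F x = ∫ t in x..y, β t := by
    intro x y _ _
    have h : (∫ t in (0:ℝ)..x, β t) + ∫ t in x..y, β t = ∫ t in (0:ℝ)..y, β t :=
      intervalIntegral.integral_add_adjacent_intervals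
        (hβc.intervalIntegrable 0 x) (hβc.intervalIntegrable x y)
    simp only [hF]
    linarith
  have hψ'pos : ∀ u, 0 < psi' β m u := fun u => Real.exp_pos _
  have hψ'ge1 : ∀ u, 0 ≤ u → 1 ≤ psi' β m u := fun u hu =>
    Real.one_le_exp (mul_nonneg hm.le (hFnn u hu))
  have hψ'c : Continuous (psi' β m) := Real.continuous_exp.comp (continuous_const.mul hFcont)
  have hψ'mono : ∀ x y, 0 ≤ x → x ≤ y → psi' β m x ≤ psi' β m y := by
    intro x y hx hxy
    apply Real.exp_le_exp.2
    apply mul_le_mul_of_nonneg_left _ hm.le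
    have h1 := hFdiff x y hx hxy
    have h2 : (0:ℝ) ≤ ∫ t in x..y, β t :=
      intervalIntegral.integral_nonneg hxy (fun t ht => hβnn t (hx.trans ht.1))
    linarith
  have hψdef : ∀ u, psi β m u = ∫ s in (0:ℝ)..u, psi' β m s := fun u => rfl
  have hψderiv : ∀ u, HasDerivAt (psi β m) (psi' β m u) u := fun u =>
    (hψ'c.integral_hasStrictDerivAt 0 u).hasDerivAt
  have hψcont : Continuous (psi β m) :=
    continuous_iff_continuousAt.2 fun u => (hψderiv u).continuousAt
  have hψ0 : psi β m 0 = 0 := by simp [psi]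
  have hψsm : StrictMono (psi β m) := by
    apply strictMono_of_deriv_pos
    intro x
    rw [(hψderiv x).deriv]
    exact hψ'pos x
  have hψge : ∀ u, 0 ≤ u → u ≤ psi β m u := by
    intro u hu
    rw [hψdef]
    calc u = ∫ _ in (0:ℝ)..u, (1:ℝ) := by simp
    _ ≤ ∫ s in (0:ℝ)..u, psi' β m s := by
        apply intervalIntegral.integral_mono_on hu intervalIntegrable_const
          (hψ'c.intervalIntegrable 0 u)
        exact fun s hs => hψ'ge1 s hs.1
  have hFeven : ∀ u, F (-u) = F u := by
    intro u
    have h1 : (∫ x in (0:ℝ)..u, β (-x)) = ∫ x in (-u)..(0:ℝ), β x := by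
      simpa using intervalIntegral.integral_comp_neg (f := β) (a := 0) (b := u)
    simp only [hodd, intervalIntegral.integral_neg] at h1
    have h2 : (∫ x in (-u)..(0:ℝ), β x) = -∫ x in (0:ℝ)..(-u), β x :=
      (intervalIntegral.integral_symm _ _)
    simp only [hF]
    rw [h2] at h1
    linarith
  have hψ'even : ∀ x, psi' β m (-x) = psi' β m x := by
    intro x
    simp only [psi']
    rw [show (∫ t in (0:ℝ)..(-x), β t) = F (-x) from rfl, hFeven, hF]
  have hψodd : ∀ u, psi β m (-u) = -psi β m u := by
    intro u
    have h1 : (∫ x in (0:ℝ)..u, psi' β m (-x)) = ∫ x in (-u)..(0:ℝ), psi' β m x := by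
      simpa using intervalIntegral.integral_comp_neg (f := psi' β m) (a := 0) (b := u)
    simp only [hψ'even] at h1
    have h2 : (∫ x in (-u)..(0:ℝ), psi' β m x) = -∫ x in (0:ℝ)..(-u), psi' β m x :=
      (intervalIntegral.integral_symm _ _)
    rw [h2] at h1
    rw [hψdef, hψdef]
    linarith [h1]
  have hψsurj : Function.Surjective (psi β m) := by
    apply Continuous.surjective hψcont
    · exact tendsto_atTop_mono' atTop
        (eventually_atTop.2 ⟨0, fun u hu => hψge u hu⟩) tendsto_id
    · apply tendsto_atBot_mono' atBot
        (eventually_atBot.2 ⟨0, fun u hu => ?_⟩) tendsto_id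
      have h1 := hψge (-u) (by linarith)
      have h2 := hψodd u
      simp only [id]
      linarith
  obtain ⟨a0, ha0⟩ := eventually_atTop.1 (htop.eventually_ge_atTop 1)
  set a : ℝ := max a0 0 with ha
  have ha0' : 0 ≤ a := le_max_right _ _
  have haβ : ∀ s, a ≤ s → 1 ≤ β s := fun s hs => ha0 s ((le_max_left _ _).trans hs)
  have key1 : ∀ u, 0 ≤ u → psi β m u ≤ u * psi' β m u := by
    intro u hu
    rw [hψdef]
    calc (∫ s in (0:ℝ)..u, psi' β m s) ≤ ∫ _ in (0:ℝ)..u, psi' β m u := by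
          apply intervalIntegral.integral_mono_on hu (hψ'c.intervalIntegrable 0 u)
            intervalIntegrable_const
          exact fun s hs => hψ'mono s u hs.1 hs.2
      _ = u * psi' β m u := by simp [mul_comm]
  have key2 : ∀ u, a ≤ u → psi β m u ≤ (a + 1/m) * psi' β m u := by
    intro u hu
    have hadd : psi β m a + (∫ s in a..u, psi' β m s) = psi β m u := by
      rw [hψdef, hψdef]
      exact intervalIntegral.integral_add_adjacent_intervals
        (hψ'c.intervalIntegrable 0 a) (hψ'c.intervalIntegrable a u)
    have hftc : (∫ s in a..u, psi' β m s * (m * β s)) = psi' β m u - psi' β m a := by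
      apply intervalIntegral.integral_eq_sub_of_hasDerivAt
      · intro x _
        have hd : HasDerivAt (fun y => m * F y) (m * β x) x := (hFderiv x).const_mul m
        exact hd.exp
      · exact ((hψ'c.mul (continuous_const.mul hβc)).intervalIntegrable a u)
    have hbound : (∫ s in a..u, psi' β m s)
        ≤ (∫ s in a..u, psi' β m s * (m * β s)) / m := by
      rw [← intervalIntegral.integral_div]
      apply intervalIntegral.integral_mono_on hu (hψ'c.intervalIntegrable a u)
        (((hψ'c.mul (continuous_const.mul hβc)).div_const m).intervalIntegrable a u)
      intro s hs
      have h1 : 1 ≤ β s := haβ s hs.1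
      have h2 : 0 < psi' β m s := hψ'pos s
      have he : psi' β m s * (m * β s) / m = psi' β m s * β s := by
        field_simp
      show psi' β m s ≤ psi' β m s * (m * β s) / m
      rw [he]
      nlinarith
    have hpa : psi β m a ≤ a * psi' β m u := by
      have h5 := key1 a ha0'
      have h6 := hψ'mono a u ha0' hu
      have h7 := hψ'pos a
      nlinarith
    have h3 : (∫ s in a..u, psi' β m s) ≤ psi' β m u / m := by
      rw [hftc, sub_div] at hbound
      have h8 : 0 < psi' β m a / m := div_pos (hψ'pos a) hm
      linarith
    have h9 : (a + 1/m) * psi' β m u = a * psi' β m u + psi' β m u / m := by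
      field_simp
    linarith
  have keyAll : ∀ u, 0 ≤ u → psi β m u ≤ (a + 1/m) * psi' β m u := by
    intro u hu
    rcases le_total u a with h | h
    · have h5 := key1 u hu
      have h6 := hψ'pos u
      have h7 : (0:ℝ) < 1/m := by positivity
      nlinarith
    · exact key2 u h
  set K : ℝ := a + 1/m with hK
  have hKpos : 0 < K := by
    have h : (0:ℝ) < 1/m := by positivity
    rw [hK]; linarith
  have main : ∀ v, 0 ≤ v → 1/K * v ≤ psi' β m (psiInv β m v) := by
    intro v hv
    set u := psiInv β m v with hu
    have huv : psi β m u = v := Function.invFun_eq (hψsurj v)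
    have hune : 0 ≤ u := by
      by_contra h
      push_neg at h
      have := hψsm h
      rw [huv, hψ0] at this
      linarith
    have := keyAll u hune
    rw [huv] at this
    rw [div_mul_eq_mul_div, one_mul, div_le_iff₀ hKpos, mul_comm]
    exact this
  exact ⟨1/K, by positivity, main, fun v hv => by linarith [main v hv]⟩
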